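/- Let N(t) be a Poisson process with rate λ > 0. Then the process W(t) - N(t)²/(2λ) + N(t)/(2λ), where W(t) = ∫₀ᵗ N(u) du, is a martingale with respect to the natural filtration of N. -/

import Mathlib

open MeasureTheory ProbabilityTheory
open scoped NNReal

/-- A Poisson (counting) process with rate `lam`, indexed by nonnegative real times:
`N 0 = 0`, paths are monotone and right-continuous (piecewise constant between jumps),
increments are independent, and the increment over `[s, t]` is Poisson with mean
`lam * (t - s)`. -/
structure PoissonProcess (Ω : Type*) [MeasurableSpace Ω] (P : Measure Ω) (lam : ℝ≥0) where
  N : ℝ≥0 → Ω → ℕ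
  measurable_N : ∀ t, Measurable (N t)
  init : ∀ ω, N 0 ω = 0
  mono : ∀ ω, Monotone fun t => N t ω
  right_continuous : ∀ ω t, ∃ ε : ℝ≥0, 0 < ε ∧ ∀ s ∈ Set.Ico t (t + ε), N s ω = N t ω
  stationary : ∀ s t : ℝ≥0, s ≤ t →
    P.map (fun ω => N t ω - N s ω) = poissonMeasure (lam * (t - s))
  indep : ∀ (n : ℕ) (t : ℕ → ℝ≥0), Monotone t →
    iIndepFun
      (fun i : Fin n => fun ω => N (t (i + 1)) ω - N (t i) ω) P

/-- The natural filtration generated by a Poisson process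
(the σ-field generated by `{N s, s ∈ [0, t]}`). -/
noncomputable def PoissonProcess.filtration {Ω : Type*} [m : MeasurableSpace Ω]
    {P : Measure Ω} {lam : ℝ≥0} (pp : PoissonProcess Ω P lam) :
    Filtration ℝ≥0 m :=
  MeasureTheory.Filtration.natural pp.N fun t => (pp.measurable_N t).stronglyMeasurable

/-- The pathwise cumulative waiting `W(t) = ∫₀ᵗ N(u) du`. -/
noncomputable def PoissonProcess.W {Ω : Type*} [MeasurableSpace Ω]
    {P : Measure Ω} {lam : ℝ≥0} (pp : PoissonProcess Ω P lam) (t : ℝ≥0) (ω : Ω) : ℝ :=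
  ∫ u in Set.Ioc (0 : ℝ) (t : ℝ), (pp.N u.toNNReal ω : ℝ)

/-! ### Auxiliary material -/

section Series

open scoped Nat

lemma hasSum_exp_ser (x : ℝ) : HasSum (fun n : ℕ => x ^ n / n !) (Real.exp x) := by
  rw [Real.exp_eq_exp_ℝ]; exact NormedSpace.expSeries_div_hasSum_exp x

lemma hasSum_n_exp_ser (x : ℝ) :
    HasSum (fun n : ℕ => (n : ℝ) * (x ^ n / n !)) (x * Real.exp x) := by
  have h2 : HasSum (fun n : ℕ => ((n + 1 : ℕ) : ℝ) * (x ^ (n + 1) / (n + 1)!))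
      (x * Real.exp x) := by
    have h := (hasSum_exp_ser x).mul_left x
    convert h using 2 with n
    case e'_3 => rfl
    have hn : ((n : ℕ) ! : ℝ) ≠ 0 := Nat.cast_ne_zero.mpr (Nat.factorial_ne_zero n)
    push_cast [Nat.factorial_succ]
    field_simp
    ring
  have h3 := (hasSum_nat_add_iff
    (f := fun n : ℕ => (n : ℝ) * (x ^ n / n !)) 1).mp h2
  simpa using h3

lemma hasSum_nn1_exp_ser (x : ℝ) :
    HasSum (fun n : ℕ => ((n : ℝ) * ((n : ℝ) - 1)) * (x ^ n / n !))
      (x ^ 2 * Real.exp x) := by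
  have h2 : HasSum (fun n : ℕ => (((n + 2 : ℕ) : ℝ) * (((n + 2 : ℕ) : ℝ) - 1)) *
      (x ^ (n + 2) / (n + 2)!)) (x ^ 2 * Real.exp x) := by
    have h := (hasSum_exp_ser x).mul_left (x ^ 2)
    convert h using 2 with n
    case e'_3 => rfl
    have hn : ((n : ℕ) ! : ℝ) ≠ 0 := Nat.cast_ne_zero.mpr (Nat.factorial_ne_zero n)
    push_cast [Nat.factorial_succ]
    field_simp
    ring
  have h3 := (hasSum_nat_add_iff
    (f := fun n : ℕ => ((n : ℝ) * ((n : ℝ) - 1)) * (x ^ n / n !)) 2).mp h2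
  simpa [Finset.sum_range_succ] using h3

lemma hasSum_sq_exp_ser (x : ℝ) :
    HasSum (fun n : ℕ => (n : ℝ) ^ 2 * (x ^ n / n !)) ((x ^ 2 + x) * Real.exp x) := by
  have h := (hasSum_nn1_exp_ser x).add (hasSum_n_exp_ser x)
  convert h using 1
  · funext n; ring
  · ring

end Series

section PoissonMoments

open scoped Nat ENNReal

lemma poissonPMF_toReal (r : ℝ≥0) (n : ℕ) :
    (poissonPMF r n).toReal = poissonPMFReal r n := by
  have h : poissonPMF r n = ENNReal.ofReal (poissonPMFReal r n) := rfl
  rw [h, ENNReal.toReal_ofReal poissonPMFReal_nonneg]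

lemma integrable_poisson_of_summable {r : ℝ≥0} {f : ℕ → ℝ}
    (hf : Summable fun n => poissonPMFReal r n * |f n|) :
    Integrable f (poissonMeasure r) := by
  refine ⟨(measurable_from_top (f := f)).aestronglyMeasurable, ?_⟩
  have : (∫⁻ n, ‖f n‖₊ ∂(poissonMeasure r)) =
      ∑' n : ℕ, (‖f n‖₊ : ℝ≥0∞) * poissonMeasure r {n} := lintegral_countable' _
  rw [HasFiniteIntegral]; simp only [enorm_eq_nnnorm]; rw [this]
  have heq : ∀ n : ℕ, (‖f n‖₊ : ℝ≥0∞) * poissonMeasure r {n}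
      = ENNReal.ofReal (poissonPMFReal r n * |f n|) := by
    intro n
    rw [show poissonMeasure r {n} = poissonPMF r n from by rw [poissonMeasure_singleton]; rfl]
    rw [← enorm_eq_nnnorm, Real.enorm_eq_ofReal_abs]
    rw [show poissonPMF r n = ENNReal.ofReal (poissonPMFReal r n) from rfl]
    rw [← ENNReal.ofReal_mul (abs_nonneg _)]
    rw [mul_comm]
  simp_rw [heq]
  rw [← ENNReal.ofReal_tsum_of_nonneg
    (fun n => mul_nonneg poissonPMFReal_nonneg (abs_nonneg _)) hf]
  exact ENNReal.ofReal_lt_top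

lemma summable_poisson_id (r : ℝ≥0) :
    Summable fun n => poissonPMFReal r n * |(n : ℝ)| := by
  have h := ((hasSum_n_exp_ser r).mul_left (Real.exp (-(r : ℝ)))).summable
  refine h.congr fun n => ?_
  rw [poissonPMFReal]
  rw [abs_of_nonneg (Nat.cast_nonneg n)]
  ring

lemma summable_poisson_sq (r : ℝ≥0) :
    Summable fun n => poissonPMFReal r n * |(n : ℝ) ^ 2| := by
  have h := ((hasSum_sq_exp_ser r).mul_left (Real.exp (-(r : ℝ)))).summable
  refine h.congr fun n => ?_
  rw [poissonPMFReal, abs_of_nonneg (sq_nonneg _)]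
  ring

lemma integrable_poisson_id (r : ℝ≥0) :
    Integrable (fun n : ℕ => (n : ℝ)) (poissonMeasure r) :=
  integrable_poisson_of_summable (summable_poisson_id r)

lemma integrable_poisson_sq (r : ℝ≥0) :
    Integrable (fun n : ℕ => (n : ℝ) ^ 2) (poissonMeasure r) :=
  integrable_poisson_of_summable (summable_poisson_sq r)

lemma exp_cancel_left (x y : ℝ) : Real.exp (-x) * (y * Real.exp x) = y := by
  rw [show Real.exp (-x) * (y * Real.exp x) = y * (Real.exp (-x) * Real.exp x) by ring,
    ← Real.exp_add, neg_add_cancel, Real.exp_zero, mul_one]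

lemma poissonMeasure_eq_toMeasure (r : ℝ≥0) :
    poissonMeasure r = (poissonPMF r).toMeasure :=
  (Measure.ext_of_singleton fun n => by rw [poissonMeasure_singleton, PMF.toMeasure_apply_singleton _ _ (measurableSet_singleton n)]; rfl)

lemma integral_poisson_id (r : ℝ≥0) :
    ∫ n : ℕ, (n : ℝ) ∂(poissonMeasure r) = r := by
  rw [show poissonMeasure r = (poissonPMF r).toMeasure from poissonMeasure_eq_toMeasure r,
    PMF.integral_eq_tsum _ _ (poissonMeasure_eq_toMeasure r ▸ integrable_poisson_id r)]
  have hs : HasSum (fun n : ℕ => (poissonPMF r n).toReal • (n : ℝ)) (r : ℝ) := by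
    have h := (hasSum_n_exp_ser r).mul_left (Real.exp (-(r : ℝ)))
    rw [exp_cancel_left] at h
    refine h.congr_fun fun n => ?_
    rw [poissonPMF_toReal, poissonPMFReal, smul_eq_mul]
    ring
  exact hs.tsum_eq

lemma integral_poisson_sq (r : ℝ≥0) :
    ∫ n : ℕ, (n : ℝ) ^ 2 ∂(poissonMeasure r) = (r : ℝ) ^ 2 + r := by
  rw [show poissonMeasure r = (poissonPMF r).toMeasure from poissonMeasure_eq_toMeasure r,
    PMF.integral_eq_tsum _ _ (poissonMeasure_eq_toMeasure r ▸ integrable_poisson_sq r)]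
  have hs : HasSum (fun n : ℕ => (poissonPMF r n).toReal • ((n : ℝ) ^ 2))
      ((r : ℝ) ^ 2 + r) := by
    have h := (hasSum_sq_exp_ser r).mul_left (Real.exp (-(r : ℝ)))
    rw [exp_cancel_left] at h
    refine h.congr_fun fun n => ?_
    rw [poissonPMF_toReal, poissonPMFReal, smul_eq_mul]
    ring
  exact hs.tsum_eq

end PoissonMoments

section RiemannSums

open Filter
open scoped Topology

noncomputable def RSum (f : ℝ → ℝ) (a b : ℝ) (n : ℕ) : ℝ :=
  ∑ i ∈ Finset.range n, f (a + ((i : ℝ) + 1) * ((b - a) / n)) * ((b - a) / n)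

lemma RSum_sub_integral {f : ℝ → ℝ} (hf : Monotone f) {a b : ℝ} (hab : a ≤ b)
    {n : ℕ} (hn : 0 < n) :
    0 ≤ RSum f a b n - ∫ u in Set.Ioc a b, f u ∧
    RSum f a b n - (∫ u in Set.Ioc a b, f u) ≤ (f b - f a) * ((b - a) / n) := by
  set Δ : ℝ := (b - a) / n with hΔ
  have hΔ0 : 0 ≤ Δ := div_nonneg (by linarith) (Nat.cast_nonneg n)
  set u : ℕ → ℝ := fun i => a + (i : ℝ) * Δ with hu
  have hmono_u : Monotone u := by
    intro i j hij
    simp only [hu]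
    have : (i : ℝ) ≤ (j : ℝ) := Nat.cast_le.mpr hij
    nlinarith
  have hu0 : u 0 = a := by simp [hu]
  have hun : u n = b := by
    simp only [hu, hΔ]
    field_simp
    ring
  have hint : ∀ i j : ℕ, IntervalIntegrable f volume (u i) (u j) :=
    fun i j => hf.intervalIntegrable
  have hsum : ∑ i ∈ Finset.range n, ∫ x in (u i)..(u (i + 1)), f x =
      ∫ x in Set.Ioc a b, f x := by
    rw [intervalIntegral.sum_integral_adjacent_intervals (fun k _ => hint k (k + 1))]
    rw [hu0, hun, intervalIntegral.integral_of_le hab]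
  have hui : ∀ i : ℕ, u (i + 1) = u i + Δ := by
    intro i; simp only [hu]; push_cast; ring
  have hpiece_up : ∀ i : ℕ, (∫ x in (u i)..(u (i + 1)), f x) ≤ f (u (i + 1)) * Δ := by
    intro i
    have h1 : (∫ x in (u i)..(u (i + 1)), f x) ≤ ∫ _ in (u i)..(u (i + 1)), f (u (i + 1)) :=
      intervalIntegral.integral_mono_on (hmono_u (Nat.le_succ i)) (hint _ _)
        intervalIntegrable_const (fun x hx => hf hx.2)
    rw [intervalIntegral.integral_const] at h1
    have hd : u (i + 1) - u i = Δ := by rw [hui i]; ring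
    rw [hd] at h1
    simpa [smul_eq_mul, mul_comm] using h1
  have hpiece_lo : ∀ i : ℕ, f (u i) * Δ ≤ ∫ x in (u i)..(u (i + 1)), f x := by
    intro i
    have h1 : (∫ _ in (u i)..(u (i + 1)), f (u i)) ≤ ∫ x in (u i)..(u (i + 1)), f x :=
      intervalIntegral.integral_mono_on (hmono_u (Nat.le_succ i))
        intervalIntegrable_const (hint _ _) (fun x hx => hf hx.1)
    rw [intervalIntegral.integral_const] at h1
    have hd : u (i + 1) - u i = Δ := by rw [hui i]; ring
    rw [hd] at h1
    simpa [smul_eq_mul, mul_comm] using h1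
  have hRS : RSum f a b n = ∑ i ∈ Finset.range n, f (u (i + 1)) * Δ := by
    refine Finset.sum_congr rfl fun i _ => ?_
    simp only [hu, hΔ]
    push_cast
    ring_nf
  constructor
  · rw [hRS, ← hsum, ← Finset.sum_sub_distrib]
    exact Finset.sum_nonneg fun i _ => sub_nonneg.mpr (hpiece_up i)
  · rw [hRS, ← hsum, ← Finset.sum_sub_distrib]
    have hterm : ∀ i ∈ Finset.range n,
        f (u (i + 1)) * Δ - (∫ x in (u i)..(u (i + 1)), f x)
          ≤ (f (u (i + 1)) - f (u i)) * Δ := by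
      intro i _
      nlinarith [hpiece_lo i]
    calc ∑ i ∈ Finset.range n, (f (u (i + 1)) * Δ - ∫ x in (u i)..(u (i + 1)), f x)
        ≤ ∑ i ∈ Finset.range n, (f (u (i + 1)) - f (u i)) * Δ :=
          Finset.sum_le_sum hterm
      _ = (f b - f a) * Δ := by
          rw [← Finset.sum_mul, Finset.sum_range_sub (fun i => f (u i)) n, hu0, hun]

lemma tendsto_RSum {f : ℝ → ℝ} (hf : Monotone f) {a b : ℝ} (hab : a ≤ b) :
    Tendsto (RSum f a b) atTop (𝓝 (∫ u in Set.Ioc a b, f u)) := by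
  set I := ∫ u in Set.Ioc a b, f u
  have hup : Tendsto (fun n : ℕ => I + (f b - f a) * ((b - a) / n)) atTop (𝓝 I) := by
    have h1 : Tendsto (fun n : ℕ => ((b - a) / n : ℝ)) atTop (𝓝 0) := by
      simpa using Tendsto.div_atTop (tendsto_const_nhds (x := (b - a : ℝ)))
        tendsto_natCast_atTop_atTop
    have := (h1.const_mul (f b - f a)).const_add I
    simpa using this
  refine tendsto_of_tendsto_of_tendsto_of_le_of_le' tendsto_const_nhds hup ?_ ?_
  · filter_upwards [eventually_ge_atTop 1] with n hn
    linarith [(RSum_sub_integral hf hab (n := n) hn).1]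
  · filter_upwards [eventually_ge_atTop 1] with n hn
    linarith [(RSum_sub_integral hf hab (n := n) hn).2]

end RiemannSums

lemma nat_telescope_Ico (a : ℕ → ℕ) (ha : Monotone a) {j k : ℕ} (hjk : j ≤ k) :
    ∑ i ∈ Finset.Ico j k, (a (i + 1) - a i) = a k - a j := by
  induction k, hjk using Nat.le_induction with
  | base => simp
  | succ k hjk ih =>
    rw [Finset.sum_Ico_succ_top hjk, ih, add_comm]
    exact tsub_add_tsub_cancel (ha (Nat.le_succ k)) (ha hjk)

namespace PoissonProcess

open Filter
open scoped Topology

set_option linter.unusedSectionVars false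

variable {Ω : Type*} [m0 : MeasurableSpace Ω] {P : Measure Ω} [IsProbabilityMeasure P]
  {lam : ℝ≥0} (pp : PoissonProcess Ω P lam)

/-! #### Independence of past and increments -/

lemma indepFun_tuple (s : ℝ≥0) (A B : Finset ℝ≥0)
    (hA : ∀ r ∈ A, r ≤ s) (hB : ∀ u ∈ B, s ≤ u) :
    IndepFun (fun ω (r : A) => pp.N r ω)
      (fun ω (u : B) => pp.N u ω - pp.N s ω) P := by
  classical
  set C : Finset ℝ≥0 := insert 0 (insert s (A ∪ B)) with hC
  have h0C : (0 : ℝ≥0) ∈ C := by simp [hC]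
  have hsC : s ∈ C := by simp [hC]
  have hAC : ∀ r ∈ A, r ∈ C := fun r hr => by simp [hC, hr]
  have hBC : ∀ u ∈ B, u ∈ C := fun u hu => by simp [hC, hu]
  set n : ℕ := C.card with hn_def
  have hn : 0 < n := Finset.card_pos.mpr ⟨0, h0C⟩
  set e : Fin n ≃o {x // x ∈ C} := C.orderIsoOfFin rfl with he
  set t : ℕ → ℝ≥0 := fun i => (e ⟨min i (n - 1), by omega⟩ : {x // x ∈ C}) with ht_def
  have ht : Monotone t := by
    intro i j hij
    exact Subtype.coe_le_coe.mpr (e.monotone (by simp [Fin.le_def]; omega))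
  set jj : {x // x ∈ C} → ℕ := fun c => ((e.symm c : Fin n) : ℕ) with hjj
  have hjj_lt : ∀ c, jj c < n := fun c => (e.symm c).isLt
  have ht_jj : ∀ c, t (jj c) = c := by
    intro c
    have h1 : min (jj c) (n - 1) = jj c := by have := hjj_lt c; omega
    simp only [ht_def, h1, hjj]
    rw [show (⟨min ((e.symm c : Fin n) : ℕ) (n - 1), by omega⟩ : Fin n) = e.symm c from Fin.ext h1]
    simp
  have ht0 : t 0 = 0 := by
    have h1 : (e ⟨min 0 (n - 1), by omega⟩ : {x // x ∈ C}) ≤ ⟨0, h0C⟩ := by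
      rw [show (⟨0, h0C⟩ : {x // x ∈ C}) = e (e.symm ⟨0, h0C⟩) by simp]
      exact e.monotone (by simp [Fin.le_def])
    exact le_antisymm h1 zero_le
  have hjj_mono : ∀ c d : {x // x ∈ C}, c ≤ d → jj c ≤ jj d := by
    intro c d hcd
    exact e.symm.monotone hcd
  set X : Fin n → Ω → ℕ := fun i ω => pp.N (t (i + 1)) ω - pp.N (t i) ω with hX
  have hiX : iIndepFun X P := pp.indep n t ht
  have hXmeas : ∀ i, Measurable (X i) :=
    fun i => (pp.measurable_N _).sub (pp.measurable_N _)
  have ha_mono : ∀ ω, Monotone fun i : ℕ => pp.N (t i) ω :=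
    fun ω _ _ hij => pp.mono ω (ht hij)
  have hsum_key : ∀ (ω : Ω) {j k : ℕ}, j ≤ k → k < n →
      ∑ i ∈ Finset.Ico j k, (pp.N (t (i + 1)) ω - pp.N (t i) ω)
        = pp.N (t k) ω - pp.N (t j) ω :=
    fun ω j k hjk _ => nat_telescope_Ico _ (ha_mono ω) hjk
  set js : ℕ := jj ⟨s, hsC⟩ with hjs
  set S : Finset (Fin n) := Finset.univ.filter (fun i => (i : ℕ) < js) with hS
  set T : Finset (Fin n) := Finset.univ.filter (fun i => js ≤ (i : ℕ)) with hT
  have hST : Disjoint S T := by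
    rw [Finset.disjoint_filter]
    intro i _ h1
    omega
  have h1 : IndepFun (fun ω (i : S) => X i ω) (fun ω (i : T) => X i ω) P :=
    hiX.indepFun_finset S T hST hXmeas
  set φA : (S → ℕ) → (A → ℕ) := fun x r =>
    ∑ i : S, if ((i : Fin n) : ℕ) < jj ⟨r, hAC r r.2⟩ then x i else 0 with hφA
  set φB : (T → ℕ) → (B → ℕ) := fun x u =>
    ∑ i : T, if ((i : Fin n) : ℕ) < jj ⟨u, hBC u u.2⟩ then x i else 0 with hφB
  have hφAm : Measurable φA := by
    refine measurable_pi_lambda _ fun r => ?_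
    refine Finset.measurable_sum _ fun i _ => ?_
    split_ifs
    · exact measurable_pi_apply i
    · exact measurable_const
  have hφBm : Measurable φB := by
    refine measurable_pi_lambda _ fun u => ?_
    refine Finset.measurable_sum _ fun i _ => ?_
    split_ifs
    · exact measurable_pi_apply i
    · exact measurable_const
  have h2 := h1.comp hφAm hφBm
  have heqA : (φA ∘ fun ω (i : S) => X i ω) = fun ω (r : A) => pp.N r ω := by
    funext ω r
    simp only [Function.comp_apply, hφA]
    set k : ℕ := jj ⟨r, hAC r r.2⟩ with hk
    have hks : k ≤ js := hjj_mono _ _ (hA r r.2)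
    have hkn : k < n := hjj_lt _
    have step1 : ∑ i : S, (if ((i : Fin n) : ℕ) < k then X i ω else 0)
        = ∑ i : Fin n, (if (i : ℕ) < k then X i ω else 0) := by
      rw [Finset.sum_coe_sort S (fun i => if ((i : Fin n) : ℕ) < k then X i ω else 0)]
      rw [hS, Finset.sum_filter]
      refine Finset.sum_congr rfl fun i _ => ?_
      by_cases h : (i : ℕ) < k
      · rw [if_pos (lt_of_lt_of_le h hks), if_pos h]
      · rw [if_neg h, ite_self]
    rw [step1]
    have step2 : ∑ i : Fin n, (if (i : ℕ) < k then X i ω else 0)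
        = ∑ m ∈ Finset.range n, (if m < k then pp.N (t (m + 1)) ω - pp.N (t m) ω else 0) :=
      Fin.sum_univ_eq_sum_range (fun m => if m < k then pp.N (t (m + 1)) ω - pp.N (t m) ω else 0) n
    rw [step2, ← Finset.sum_filter]
    have hfil : (Finset.range n).filter (fun m => m < k) = Finset.Ico 0 k := by
      ext m
      simp [Finset.mem_filter, Finset.mem_range, Finset.mem_Ico]
      omega
    rw [hfil, hsum_key ω (Nat.zero_le k) hkn, ht_jj, ht0]
    simp [pp.init ω]
  have heqB : (φB ∘ fun ω (i : T) => X i ω)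
      = fun ω (u : B) => pp.N u ω - pp.N s ω := by
    funext ω u
    simp only [Function.comp_apply, hφB]
    set k : ℕ := jj ⟨u, hBC u u.2⟩ with hk
    have hks : js ≤ k := hjj_mono _ _ (hB u u.2)
    have hkn : k < n := hjj_lt _
    have step1 : ∑ i : T, (if ((i : Fin n) : ℕ) < k then X i ω else 0)
        = ∑ i : Fin n, (if js ≤ (i : ℕ) ∧ (i : ℕ) < k then X i ω else 0) := by
      rw [Finset.sum_coe_sort T (fun i => if ((i : Fin n) : ℕ) < k then X i ω else 0)]
      rw [hT, Finset.sum_filter]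
      refine Finset.sum_congr rfl fun i _ => ?_
      by_cases h : js ≤ (i : ℕ) ∧ (i : ℕ) < k
      · rw [if_pos h.1, if_pos h.2, if_pos h]
      · by_cases h1 : js ≤ (i : ℕ)
        · rw [if_pos h1, if_neg (fun hk' => h ⟨h1, hk'⟩), if_neg h]
        · rw [if_neg h1, if_neg h]
    rw [step1]
    have step2 : ∑ i : Fin n, (if js ≤ (i : ℕ) ∧ (i : ℕ) < k then X i ω else 0)
        = ∑ m ∈ Finset.range n,
            (if js ≤ m ∧ m < k then pp.N (t (m + 1)) ω - pp.N (t m) ω else 0) :=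
      Fin.sum_univ_eq_sum_range
        (fun m => if js ≤ m ∧ m < k then pp.N (t (m + 1)) ω - pp.N (t m) ω else 0) n
    rw [step2, ← Finset.sum_filter]
    have hfil : (Finset.range n).filter (fun m => js ≤ m ∧ m < k) = Finset.Ico js k := by
      ext m
      simp [Finset.mem_filter, Finset.mem_range, Finset.mem_Ico]
      omega
    rw [hfil, hsum_key ω hks hkn, ht_jj, ht_jj]
  rw [heqA, heqB] at h2
  exact h2

/-- The σ-algebra generated by all increments after time `s`. -/
def future (s : ℝ≥0) : MeasurableSpace Ω :=
  ⨆ u : {u : ℝ≥0 // s ≤ u},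
    MeasurableSpace.comap (fun ω => pp.N u.1 ω - pp.N s ω) inferInstance

lemma future_le (s : ℝ≥0) : pp.future s ≤ m0 :=
  iSup_le fun u => ((pp.measurable_N u.1).sub (pp.measurable_N s)).comap_le

lemma indep_filtration_future (s : ℝ≥0) :
    Indep (pp.filtration s) (pp.future s) P := by
  classical
  set D : ℝ≥0 → Ω → ℕ := fun u ω => pp.N u ω - pp.N s ω with hD
  have hDmeas : ∀ u, Measurable (D u) := fun u => (pp.measurable_N u).sub (pp.measurable_N s)
  set c₁ : {r : ℝ≥0 // r ≤ s} → MeasurableSpace Ω :=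
    fun r => MeasurableSpace.comap (pp.N r.1) inferInstance with hc₁
  set c₂ : {u : ℝ≥0 // s ≤ u} → MeasurableSpace Ω :=
    fun u => MeasurableSpace.comap (D u.1) inferInstance with hc₂
  have hc₁le : ∀ r, c₁ r ≤ m0 := fun r => (pp.measurable_N r.1).comap_le
  have hc₂le : ∀ u, c₂ u ≤ m0 := fun u => (hDmeas u.1).comap_le
  have hFG : ∀ (F : Finset {r : ℝ≥0 // r ≤ s}) (G : Finset {u : ℝ≥0 // s ≤ u}),
      Indep (⨆ r ∈ F, c₁ r) (⨆ u ∈ G, c₂ u) P := by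
    intro F G
    set A : Finset ℝ≥0 := F.image Subtype.val with hA
    set B : Finset ℝ≥0 := G.image Subtype.val with hB
    have hA' : ∀ r ∈ A, r ≤ s := by
      intro r hr; simp only [hA, Finset.mem_image] at hr
      obtain ⟨r', _, rfl⟩ := hr; exact r'.2
    have hB' : ∀ u ∈ B, s ≤ u := by
      intro u hu; simp only [hB, Finset.mem_image] at hu
      obtain ⟨u', _, rfl⟩ := hu; exact u'.2
    have hIF : Indep
        (MeasurableSpace.comap (fun ω (r : A) => pp.N r.1 ω) MeasurableSpace.pi)
        (MeasurableSpace.comap (fun ω (u : B) => pp.N u.1 ω - pp.N s ω) MeasurableSpace.pi)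
        P := pp.indepFun_tuple s A B hA' hB'
    refine indep_of_indep_of_le_left (indep_of_indep_of_le_right hIF ?_) ?_
    · refine iSup₂_le fun u hu => ?_
      have hmem : u.1 ∈ B := Finset.mem_image_of_mem _ hu
      have heq : D u.1 = (fun v : (B → ℕ) => v ⟨u.1, hmem⟩) ∘
          (fun ω (u' : B) => pp.N u'.1 ω - pp.N s ω) := rfl
      show MeasurableSpace.comap (D u.1) inferInstance ≤ _
      rw [heq, ← MeasurableSpace.comap_comp]
      exact MeasurableSpace.comap_mono (measurable_pi_apply _).comap_le
    · refine iSup₂_le fun r hr => ?_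
      have hmem : r.1 ∈ A := Finset.mem_image_of_mem _ hr
      have heq : pp.N r.1 = (fun v : (A → ℕ) => v ⟨r.1, hmem⟩) ∘
          (fun ω (r' : A) => pp.N r'.1 ω) := rfl
      show MeasurableSpace.comap (pp.N r.1) inferInstance ≤ _
      rw [heq, ← MeasurableSpace.comap_comp]
      exact MeasurableSpace.comap_mono (measurable_pi_apply _).comap_le
  have hdir₁ : Directed (· ≤ ·) fun F : Finset {r : ℝ≥0 // r ≤ s} => ⨆ r ∈ F, c₁ r := by
    refine Monotone.directed_le fun F F' hFF' => ?_
    exact biSup_mono fun r hr => hFF' hr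
  have hdir₂ : Directed (· ≤ ·) fun G : Finset {u : ℝ≥0 // s ≤ u} => ⨆ u ∈ G, c₂ u := by
    refine Monotone.directed_le fun G G' hGG' => ?_
    exact biSup_mono fun u hu => hGG' hu
  have h2 : ∀ G : Finset {u : ℝ≥0 // s ≤ u},
      Indep (⨆ r : {r : ℝ≥0 // r ≤ s}, c₁ r) (⨆ u ∈ G, c₂ u) P := by
    intro G
    rw [iSup_eq_iSup_finset]
    exact indep_iSup_of_directed_le (fun F => hFG F G)
      (fun F => iSup₂_le fun r _ => hc₁le r) (iSup₂_le fun u _ => hc₂le u) hdir₁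
  have h3 : Indep (⨆ r : {r : ℝ≥0 // r ≤ s}, c₁ r) (⨆ u : {u : ℝ≥0 // s ≤ u}, c₂ u) P := by
    refine Indep.symm ?_
    rw [iSup_eq_iSup_finset (s := c₂)]
    exact indep_iSup_of_directed_le (fun G => (h2 G).symm)
      (fun G => iSup₂_le fun u _ => hc₂le u)
      (iSup_le fun r => hc₁le r) hdir₂
  have hnat : (pp.filtration s : MeasurableSpace Ω)
      = ⨆ r : {r : ℝ≥0 // r ≤ s}, c₁ r := by
    rw [show (pp.filtration s : MeasurableSpace Ω)
      = ⨆ j, ⨆ _ : j ≤ s, MeasurableSpace.comap (pp.N j) inferInstance from rfl]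
    rw [iSup_subtype']
  rw [hnat]
  exact h3

/-! #### Moments of increments -/

lemma cast_sub (s t : ℝ≥0) (hst : s ≤ t) (ω : Ω) :
    ((pp.N t ω - pp.N s ω : ℕ) : ℝ) = (pp.N t ω : ℝ) - (pp.N s ω : ℝ) :=
  Nat.cast_sub (pp.mono ω hst)

lemma integrable_D (s t : ℝ≥0) (hst : s ≤ t) :
    Integrable (fun ω => ((pp.N t ω - pp.N s ω : ℕ) : ℝ)) P := by
  have h := integrable_poisson_id (lam * (t - s))
  rw [← pp.stationary s t hst] at h
  exact (integrable_map_measure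
    (measurable_from_top (f := fun n : ℕ => (n : ℝ))).aestronglyMeasurable
    ((pp.measurable_N t).sub (pp.measurable_N s)).aemeasurable).mp h

lemma integrable_D_sq (s t : ℝ≥0) (hst : s ≤ t) :
    Integrable (fun ω => ((pp.N t ω - pp.N s ω : ℕ) : ℝ) ^ 2) P := by
  have h := integrable_poisson_sq (lam * (t - s))
  rw [← pp.stationary s t hst] at h
  exact (integrable_map_measure
    (measurable_from_top (f := fun n : ℕ => (n : ℝ) ^ 2)).aestronglyMeasurable
    ((pp.measurable_N t).sub (pp.measurable_N s)).aemeasurable).mp h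

lemma coe_lam_sub (s t : ℝ≥0) (hst : s ≤ t) :
    ((lam * (t - s) : ℝ≥0) : ℝ) = (lam : ℝ) * ((t : ℝ) - s) := by
  push_cast [NNReal.coe_sub hst]
  ring

lemma integral_D (s t : ℝ≥0) (hst : s ≤ t) :
    ∫ ω, ((pp.N t ω - pp.N s ω : ℕ) : ℝ) ∂P = (lam : ℝ) * ((t : ℝ) - s) := by
  have h := integral_map (μ := P) (φ := fun ω => pp.N t ω - pp.N s ω)
    ((pp.measurable_N t).sub (pp.measurable_N s)).aemeasurable
    (measurable_from_top (f := fun n : ℕ => (n : ℝ))).aestronglyMeasurable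
  rw [pp.stationary s t hst, integral_poisson_id] at h
  rw [← h, coe_lam_sub s t hst]

lemma integral_D_sq (s t : ℝ≥0) (hst : s ≤ t) :
    ∫ ω, ((pp.N t ω - pp.N s ω : ℕ) : ℝ) ^ 2 ∂P
      = ((lam : ℝ) * ((t : ℝ) - s)) ^ 2 + (lam : ℝ) * ((t : ℝ) - s) := by
  have h := integral_map (μ := P) (φ := fun ω => pp.N t ω - pp.N s ω)
    ((pp.measurable_N t).sub (pp.measurable_N s)).aemeasurable
    (measurable_from_top (f := fun n : ℕ => (n : ℝ) ^ 2)).aestronglyMeasurable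
  rw [pp.stationary s t hst, integral_poisson_sq] at h
  rw [← h, coe_lam_sub s t hst]

lemma integrable_N (t : ℝ≥0) : Integrable (fun ω => (pp.N t ω : ℝ)) P := by
  have h := pp.integrable_D 0 t zero_le
  simpa [pp.init] using h

lemma integrable_N_sq (t : ℝ≥0) : Integrable (fun ω => (pp.N t ω : ℝ) ^ 2) P := by
  have h := pp.integrable_D_sq 0 t zero_le
  simpa [pp.init] using h

/-! #### The path integral `W` -/

lemma mono_path (ω : Ω) : Monotone fun u : ℝ => (pp.N u.toNNReal ω : ℝ) :=
  fun _ _ huv => Nat.cast_le.mpr (pp.mono ω (Real.toNNReal_mono huv))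

lemma integrableOn_path (ω : Ω) (a b : ℝ) :
    IntegrableOn (fun u : ℝ => (pp.N u.toNNReal ω : ℝ)) (Set.Ioc a b) volume :=
  ((pp.mono_path ω).intervalIntegrable).1

lemma tendsto_RSum_W (t : ℝ≥0) (ω : Ω) :
    Tendsto (fun n => RSum (fun u => (pp.N u.toNNReal ω : ℝ)) 0 t n) atTop
      (𝓝 (pp.W t ω)) :=
  tendsto_RSum (pp.mono_path ω) t.coe_nonneg

lemma comap_le_filt {v t : ℝ≥0} (hvt : v ≤ t) :
    MeasurableSpace.comap (pp.N v) inferInstance ≤ pp.filtration t := by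
  rw [show (pp.filtration t : MeasurableSpace Ω)
    = ⨆ j, ⨆ _ : j ≤ t, MeasurableSpace.comap (pp.N j) inferInstance from rfl]
  exact le_iSup₂ (f := fun j (_ : j ≤ t) => MeasurableSpace.comap (pp.N j) inferInstance) v hvt

lemma measurable_N_filt {v t : ℝ≥0} (hvt : v ≤ t) :
    Measurable[pp.filtration t] fun ω => (pp.N v ω : ℝ) :=
  measurable_from_top.comp (measurable_iff_comap_le.mpr (pp.comap_le_filt hvt))

lemma partition_pt {a b : ℝ} (ha : 0 ≤ a) (hab : a ≤ b) {n i : ℕ} (hin : i < n) :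
    a.toNNReal ≤ (a + ((i : ℝ) + 1) * ((b - a) / n)).toNNReal ∧
    (a + ((i : ℝ) + 1) * ((b - a) / n)).toNNReal ≤ b.toNNReal ∧
    ((a + ((i : ℝ) + 1) * ((b - a) / n)).toNNReal : ℝ)
      = a + ((i : ℝ) + 1) * ((b - a) / n) := by
  have hn : (0 : ℝ) < n := by
    have : 0 < n := by omega
    exact_mod_cast this
  have hΔ : 0 ≤ (b - a) / n := div_nonneg (by linarith) hn.le
  have hx : 0 ≤ ((i : ℝ) + 1) * ((b - a) / n) := mul_nonneg (by positivity) hΔ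
  have hle : a + ((i : ℝ) + 1) * ((b - a) / n) ≤ b := by
    have h1 : ((i : ℝ) + 1) ≤ (n : ℝ) := by
      have : (i + 1 : ℕ) ≤ n := hin
      exact_mod_cast this
    have h2 : ((i : ℝ) + 1) * ((b - a) / n) ≤ (n : ℝ) * ((b - a) / n) :=
      mul_le_mul_of_nonneg_right h1 hΔ
    have h3 : (n : ℝ) * ((b - a) / n) = b - a := by field_simp
    linarith
  exact ⟨Real.toNNReal_mono (by linarith), Real.toNNReal_mono hle,
    Real.coe_toNNReal _ (by linarith)⟩

lemma sm_W_filt (t : ℝ≥0) : StronglyMeasurable[pp.filtration t] (pp.W t) := by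
  refine stronglyMeasurable_of_tendsto (f := fun n ω =>
    RSum (fun u => (pp.N u.toNNReal ω : ℝ)) 0 t n) atTop (fun n => ?_) ?_
  · refine Measurable.stronglyMeasurable ?_
    simp only [RSum]
    refine Finset.measurable_sum _ fun i hi => ?_
    have hin : i < n := Finset.mem_range.mp hi
    have hpt := partition_pt (le_refl (0 : ℝ)) t.coe_nonneg hin
    have hvt : ((0 : ℝ) + ((i : ℝ) + 1) * (((t : ℝ) - 0) / n)).toNNReal ≤ t := by
      have := hpt.2.1
      rwa [Real.toNNReal_coe] at this
    exact (pp.measurable_N_filt hvt).mul_const _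
  · rw [tendsto_pi_nhds]
    exact fun ω => pp.tendsto_RSum_W t ω

lemma W_nonneg (t : ℝ≥0) (ω : Ω) : 0 ≤ pp.W t ω :=
  setIntegral_nonneg measurableSet_Ioc fun u _ => Nat.cast_nonneg _

lemma W_le (t : ℝ≥0) (ω : Ω) : pp.W t ω ≤ (t : ℝ) * (pp.N t ω : ℝ) := by
  have h1 : ∀ u ∈ Set.Ioc (0 : ℝ) (t : ℝ), (pp.N u.toNNReal ω : ℝ) ≤ (pp.N t ω : ℝ) :=
    fun u hu => Nat.cast_le.mpr
      (pp.mono ω ((Real.toNNReal_mono hu.2).trans_eq Real.toNNReal_coe))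
  have h2 := setIntegral_mono_on (pp.integrableOn_path ω 0 t)
    (integrableOn_const measure_Ioc_lt_top.ne) measurableSet_Ioc h1
  rwa [setIntegral_const, Real.volume_real_Ioc_of_le t.coe_nonneg,
    smul_eq_mul, sub_zero] at h2

lemma integrable_W (t : ℝ≥0) : Integrable (pp.W t) P := by
  refine Integrable.mono ((pp.integrable_N t).const_mul (t : ℝ))
    (((pp.sm_W_filt t).mono (pp.filtration.le t)).aestronglyMeasurable) ?_
  refine Filter.Eventually.of_forall fun ω => ?_
  rw [Real.norm_eq_abs, Real.norm_eq_abs, abs_of_nonneg (pp.W_nonneg t ω),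
    abs_of_nonneg (by positivity : (0 : ℝ) ≤ (t : ℝ) * (pp.N t ω : ℝ))]
  exact pp.W_le t ω

lemma W_split {s t : ℝ≥0} (hst : s ≤ t) (ω : Ω) :
    pp.W t ω = pp.W s ω + ∫ u in Set.Ioc (s : ℝ) (t : ℝ), (pp.N u.toNNReal ω : ℝ) := by
  have hcast : (s : ℝ) ≤ t := NNReal.coe_le_coe.mpr hst
  have h := setIntegral_union (Set.Ioc_disjoint_Ioc_of_le le_rfl) measurableSet_Ioc
    (pp.integrableOn_path ω 0 s) (pp.integrableOn_path ω s t)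
    (f := fun u : ℝ => (pp.N u.toNNReal ω : ℝ))
  rw [Set.Ioc_union_Ioc_eq_Ioc s.coe_nonneg hcast] at h
  exact h

lemma Ys_integral_eq {s t : ℝ≥0} (hst : s ≤ t) (ω : Ω) :
    (∫ u in Set.Ioc (s : ℝ) (t : ℝ), ((pp.N u.toNNReal ω : ℝ) - pp.N s ω))
      = pp.W t ω - pp.W s ω - (pp.N s ω : ℝ) * ((t : ℝ) - s) := by
  have hcast : (s : ℝ) ≤ t := NNReal.coe_le_coe.mpr hst
  rw [integral_sub (pp.integrableOn_path ω s t)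
    (integrableOn_const measure_Ioc_lt_top.ne)]
  rw [setIntegral_const, Real.volume_real_Ioc_of_le hcast, smul_eq_mul]
  rw [pp.W_split hst ω]
  ring

lemma measurable_D_future {s u : ℝ≥0} (hsu : s ≤ u) :
    Measurable[pp.future s] fun ω => ((pp.N u ω - pp.N s ω : ℕ) : ℝ) := by
  have hle : MeasurableSpace.comap (fun ω => pp.N u ω - pp.N s ω) inferInstance
      ≤ pp.future s :=
    le_iSup (fun v : {v : ℝ≥0 // s ≤ v} =>
      MeasurableSpace.comap (fun ω => pp.N v.1 ω - pp.N s ω) inferInstance) ⟨u, hsu⟩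
  exact measurable_from_top.comp (measurable_iff_comap_le.mpr hle)

lemma measurable_RSum_future {s t : ℝ≥0} (hst : s ≤ t) (n : ℕ) :
    Measurable[pp.future s] fun ω =>
      RSum (fun u => (pp.N u.toNNReal ω : ℝ) - pp.N s ω) s t n := by
  simp only [RSum]
  refine Finset.measurable_sum _ fun i hi => ?_
  have hin : i < n := Finset.mem_range.mp hi
  have hpt := partition_pt s.coe_nonneg (NNReal.coe_le_coe.mpr hst) hin
  have hsv : s ≤ ((s : ℝ) + ((i : ℝ) + 1) * (((t : ℝ) - s) / n)).toNNReal := by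
    have := hpt.1
    rwa [Real.toNNReal_coe] at this
  have heq : (fun ω => (pp.N ((s : ℝ) + ((i : ℝ) + 1) * (((t : ℝ) - s) / n)).toNNReal ω : ℝ)
        - pp.N s ω)
      = fun ω => ((pp.N ((s : ℝ) + ((i : ℝ) + 1) * (((t : ℝ) - s) / n)).toNNReal ω
        - pp.N s ω : ℕ) : ℝ) :=
    funext fun ω => (pp.cast_sub s _ hsv ω).symm
  have hmeas : Measurable[pp.future s] fun ω =>
      (pp.N ((s : ℝ) + ((i : ℝ) + 1) * (((t : ℝ) - s) / n)).toNNReal ω : ℝ) - pp.N s ω := by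
    rw [heq]
    exact pp.measurable_D_future hsv
  exact hmeas.mul_const _

lemma tendsto_RSum_Ys {s t : ℝ≥0} (hst : s ≤ t) (ω : Ω) :
    Tendsto (fun n => RSum (fun u => (pp.N u.toNNReal ω : ℝ) - pp.N s ω) s t n) atTop
      (𝓝 (pp.W t ω - pp.W s ω - (pp.N s ω : ℝ) * ((t : ℝ) - s))) := by
  have hmono : Monotone fun u : ℝ => (pp.N u.toNNReal ω : ℝ) - pp.N s ω :=
    fun a b hab => sub_le_sub_right (pp.mono_path ω hab) _
  have h := tendsto_RSum hmono (NNReal.coe_le_coe.mpr hst)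
  rwa [pp.Ys_integral_eq hst ω] at h

lemma sm_Ys_future {s t : ℝ≥0} (hst : s ≤ t) :
    StronglyMeasurable[pp.future s]
      (fun ω => pp.W t ω - pp.W s ω - (pp.N s ω : ℝ) * ((t : ℝ) - s)) := by
  refine stronglyMeasurable_of_tendsto (f := fun n ω =>
    RSum (fun u => (pp.N u.toNNReal ω : ℝ) - pp.N s ω) s t n) atTop
    (fun n => (pp.measurable_RSum_future hst n).stronglyMeasurable) ?_
  rw [tendsto_pi_nhds]
  exact fun ω => pp.tendsto_RSum_Ys hst ω

lemma gauss_sum (n : ℕ) :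
    ∑ i ∈ Finset.range n, ((i : ℝ) + 1) = n * (n + 1) / 2 := by
  induction n with
  | zero => simp
  | succ n ih =>
    rw [Finset.sum_range_succ, ih]
    push_cast
    ring

lemma integral_RSum_Ys {s t : ℝ≥0} (hst : s ≤ t) (n : ℕ) :
    ∫ ω, RSum (fun u => (pp.N u.toNNReal ω : ℝ) - pp.N s ω) s t n ∂P
      = (lam : ℝ) * (((t : ℝ) - s) / n) ^ 2 * (n * (n + 1) / 2) := by
  simp only [RSum]
  rw [integral_finset_sum]
  · have hterm : ∀ i ∈ Finset.range n,
        (∫ ω, ((pp.N ((s : ℝ) + ((i : ℝ) + 1) * (((t : ℝ) - s) / n)).toNNReal ω : ℝ)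
          - pp.N s ω) * (((t : ℝ) - s) / n) ∂P)
        = (lam : ℝ) * (((i : ℝ) + 1) * (((t : ℝ) - s) / n)) * (((t : ℝ) - s) / n) := by
      intro i hi
      have hin : i < n := Finset.mem_range.mp hi
      have hpt := partition_pt s.coe_nonneg (NNReal.coe_le_coe.mpr hst) hin
      have hsv : s ≤ ((s : ℝ) + ((i : ℝ) + 1) * (((t : ℝ) - s) / n)).toNNReal := by
        have := hpt.1; rwa [Real.toNNReal_coe] at this
      have heq : ∀ ω,
          (pp.N ((s : ℝ) + ((i : ℝ) + 1) * (((t : ℝ) - s) / n)).toNNReal ω : ℝ) - pp.N s ω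
          = ((pp.N ((s : ℝ) + ((i : ℝ) + 1) * (((t : ℝ) - s) / n)).toNNReal ω
            - pp.N s ω : ℕ) : ℝ) :=
        fun ω => (pp.cast_sub s _ hsv ω).symm
      rw [integral_mul_const]
      simp only [heq]
      rw [pp.integral_D s _ hsv, hpt.2.2]
      ring
    rw [Finset.sum_congr rfl hterm, ← Finset.sum_mul]
    have : ∀ i ∈ Finset.range n,
        (lam : ℝ) * (((i : ℝ) + 1) * (((t : ℝ) - s) / n))
        = ((lam : ℝ) * (((t : ℝ) - s) / n)) * ((i : ℝ) + 1) := by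
      intro i _; ring
    rw [Finset.sum_congr rfl this, ← Finset.mul_sum, gauss_sum]
    ring
  · intro i hi
    have hin : i < n := Finset.mem_range.mp hi
    have hpt := partition_pt s.coe_nonneg (NNReal.coe_le_coe.mpr hst) hin
    have hsv : s ≤ ((s : ℝ) + ((i : ℝ) + 1) * (((t : ℝ) - s) / n)).toNNReal := by
      have := hpt.1; rwa [Real.toNNReal_coe] at this
    have heq : ∀ ω,
        (pp.N ((s : ℝ) + ((i : ℝ) + 1) * (((t : ℝ) - s) / n)).toNNReal ω : ℝ) - pp.N s ω
        = ((pp.N ((s : ℝ) + ((i : ℝ) + 1) * (((t : ℝ) - s) / n)).toNNReal ω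
          - pp.N s ω : ℕ) : ℝ) :=
      fun ω => (pp.cast_sub s _ hsv ω).symm
    simp only [heq]
    exact (pp.integrable_D s _ hsv).mul_const _

lemma RSum_Ys_bounds {s t : ℝ≥0} (hst : s ≤ t) (n : ℕ) (ω : Ω) :
    0 ≤ RSum (fun u => (pp.N u.toNNReal ω : ℝ) - pp.N s ω) s t n ∧
    RSum (fun u => (pp.N u.toNNReal ω : ℝ) - pp.N s ω) s t n
      ≤ ((t : ℝ) - s) * (pp.N t ω : ℝ) := by
  have hcast : (s : ℝ) ≤ t := NNReal.coe_le_coe.mpr hst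
  have hΔ : 0 ≤ ((t : ℝ) - s) / n := div_nonneg (by linarith) (Nat.cast_nonneg n)
  constructor
  · refine Finset.sum_nonneg fun i hi => ?_
    have hin : i < n := Finset.mem_range.mp hi
    have hpt := partition_pt s.coe_nonneg hcast hin
    have hsv : s ≤ ((s : ℝ) + ((i : ℝ) + 1) * (((t : ℝ) - s) / n)).toNNReal := by
      have := hpt.1; rwa [Real.toNNReal_coe] at this
    have : (pp.N s ω : ℝ) ≤ pp.N _ ω := Nat.cast_le.mpr (pp.mono ω hsv)
    have h0 := this
    exact mul_nonneg (by linarith) hΔ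
  · have hbound : ∀ i ∈ Finset.range n,
        ((pp.N ((s : ℝ) + ((i : ℝ) + 1) * (((t : ℝ) - s) / n)).toNNReal ω : ℝ) - pp.N s ω)
          * (((t : ℝ) - s) / n)
        ≤ (pp.N t ω : ℝ) * (((t : ℝ) - s) / n) := by
      intro i hi
      have hin : i < n := Finset.mem_range.mp hi
      have hpt := partition_pt s.coe_nonneg hcast hin
      have hvt : ((s : ℝ) + ((i : ℝ) + 1) * (((t : ℝ) - s) / n)).toNNReal ≤ t := by
        have := hpt.2.1; rwa [Real.toNNReal_coe] at this
      have h1 : (pp.N ((s : ℝ) + ((i : ℝ) + 1) * (((t : ℝ) - s) / n)).toNNReal ω : ℝ)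
          ≤ (pp.N t ω : ℝ) := Nat.cast_le.mpr (pp.mono ω hvt)
      have h2 : (0 : ℝ) ≤ (pp.N s ω : ℝ) := Nat.cast_nonneg _
      exact mul_le_mul_of_nonneg_right (by linarith) hΔ
    have h3 := Finset.sum_le_sum hbound
    have h4 : ∑ _i ∈ Finset.range n, (pp.N t ω : ℝ) * (((t : ℝ) - s) / n)
        = (n : ℝ) * ((pp.N t ω : ℝ) * (((t : ℝ) - s) / n)) := by
      rw [Finset.sum_const, Finset.card_range, nsmul_eq_mul]
    have h5 : (n : ℝ) * ((pp.N t ω : ℝ) * (((t : ℝ) - s) / n))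
        ≤ ((t : ℝ) - s) * (pp.N t ω : ℝ) := by
      rcases Nat.eq_zero_or_pos n with hn | hn
      · subst hn
        norm_num
        exact mul_nonneg (by linarith) (Nat.cast_nonneg _)
      · have hn' : (n : ℝ) ≠ 0 := Nat.cast_ne_zero.mpr (by omega)
        rw [show (n : ℝ) * ((pp.N t ω : ℝ) * (((t : ℝ) - s) / n))
          = ((t : ℝ) - s) * (pp.N t ω : ℝ) by field_simp]
    calc RSum (fun u => (pp.N u.toNNReal ω : ℝ) - pp.N s ω) s t n
        ≤ ∑ _i ∈ Finset.range n, (pp.N t ω : ℝ) * (((t : ℝ) - s) / n) := h3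
      _ = (n : ℝ) * ((pp.N t ω : ℝ) * (((t : ℝ) - s) / n)) := h4
      _ ≤ ((t : ℝ) - s) * (pp.N t ω : ℝ) := h5

lemma integral_Ys {s t : ℝ≥0} (hst : s ≤ t) :
    ∫ ω, (pp.W t ω - pp.W s ω - (pp.N s ω : ℝ) * ((t : ℝ) - s)) ∂P
      = (lam : ℝ) * ((t : ℝ) - s) ^ 2 / 2 := by
  have hcast : (s : ℝ) ≤ t := NNReal.coe_le_coe.mpr hst
  have hFmeas : ∀ n : ℕ, AEStronglyMeasurable
      (fun ω => RSum (fun u => (pp.N u.toNNReal ω : ℝ) - pp.N s ω) s t n) P :=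
    fun n => (((pp.measurable_RSum_future hst n).mono (pp.future_le s) le_rfl)).aestronglyMeasurable
  have hbint : Integrable (fun ω => ((t : ℝ) - s) * (pp.N t ω : ℝ)) P :=
    (pp.integrable_N t).const_mul _
  have hbound : ∀ n : ℕ, ∀ᵐ ω ∂P,
      ‖RSum (fun u => (pp.N u.toNNReal ω : ℝ) - pp.N s ω) s t n‖
        ≤ ((t : ℝ) - s) * (pp.N t ω : ℝ) := by
    intro n
    refine Filter.Eventually.of_forall fun ω => ?_
    have h := pp.RSum_Ys_bounds hst n ω
    rw [Real.norm_eq_abs, abs_of_nonneg h.1]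
    exact h.2
  have hlim : ∀ᵐ ω ∂P, Tendsto
      (fun n => RSum (fun u => (pp.N u.toNNReal ω : ℝ) - pp.N s ω) s t n) atTop
      (𝓝 (pp.W t ω - pp.W s ω - (pp.N s ω : ℝ) * ((t : ℝ) - s))) :=
    Filter.Eventually.of_forall fun ω => pp.tendsto_RSum_Ys hst ω
  have h := tendsto_integral_of_dominated_convergence _ hFmeas hbint hbound hlim
  have hvals : Tendsto
      (fun n : ℕ => ∫ ω, RSum (fun u => (pp.N u.toNNReal ω : ℝ) - pp.N s ω) s t n ∂P)
      atTop (𝓝 ((lam : ℝ) * ((t : ℝ) - s) ^ 2 / 2)) := by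
    have heq : ∀ᶠ n : ℕ in atTop,
        (lam : ℝ) * ((t : ℝ) - s) ^ 2 / 2 * (1 + 1 / (n : ℝ))
          = ∫ ω, RSum (fun u => (pp.N u.toNNReal ω : ℝ) - pp.N s ω) s t n ∂P := by
      filter_upwards [eventually_ge_atTop 1] with n hn
      rw [pp.integral_RSum_Ys hst n]
      have hn' : (n : ℝ) ≠ 0 := Nat.cast_ne_zero.mpr (by omega)
      field_simp
    have htend : Tendsto (fun n : ℕ =>
        (lam : ℝ) * ((t : ℝ) - s) ^ 2 / 2 * (1 + 1 / (n : ℝ))) atTop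
        (𝓝 ((lam : ℝ) * ((t : ℝ) - s) ^ 2 / 2)) := by
      have h1 : Tendsto (fun n : ℕ => 1 + 1 / (n : ℝ)) atTop (𝓝 1) := by
        have := (tendsto_one_div_atTop_nhds_zero_nat (𝕜 := ℝ)).const_add 1
        simpa using this
      have := h1.const_mul ((lam : ℝ) * ((t : ℝ) - s) ^ 2 / 2)
      simpa using this
    exact Tendsto.congr' heq htend
  exact tendsto_nhds_unique h hvals

lemma indepFun_Ns_D {s t : ℝ≥0} (hst : s ≤ t) :
    IndepFun (fun ω => (pp.N s ω : ℝ)) (fun ω => ((pp.N t ω - pp.N s ω : ℕ) : ℝ)) P := by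
  classical
  have h := pp.indepFun_tuple s {s} {t} (by simp) (by simp [hst])
  have h2 := h.comp
    (φ := fun v : (({s} : Finset ℝ≥0) → ℕ) =>
      ((v ⟨s, Finset.mem_singleton_self s⟩ : ℕ) : ℝ))
    (ψ := fun v : (({t} : Finset ℝ≥0) → ℕ) =>
      ((v ⟨t, Finset.mem_singleton_self t⟩ : ℕ) : ℝ))
    (measurable_from_top.comp (measurable_pi_apply _))
    (measurable_from_top.comp (measurable_pi_apply _))
  exact h2

end PoissonProcess

/-- For a Poisson process `N` with rate `λ > 0`, the process
`W(t) - N(t)²/(2λ) + N(t)/(2λ)`, where `W(t) = ∫₀ᵗ N(u) du`, is a martingale with respect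
to the natural filtration of `N`. -/
theorem stmt10 {Ω : Type*} [MeasurableSpace Ω] (P : Measure Ω) [IsProbabilityMeasure P]
    (lam : ℝ≥0) (hlam : 0 < lam) (pp : PoissonProcess Ω P lam) :
    Martingale
      (fun (t : ℝ≥0) (ω : Ω) =>
        pp.W t ω - (pp.N t ω : ℝ) ^ 2 / (2 * lam) + (pp.N t ω : ℝ) / (2 * lam))
      pp.filtration P := by
  have hlam0 : (lam : ℝ) ≠ 0 := ne_of_gt (by exact_mod_cast hlam)
  constructor
  · intro t
    have hN := pp.measurable_N_filt (le_refl t)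
    exact ((pp.sm_W_filt t).sub
        (((hN.pow_const 2).div_const _).stronglyMeasurable)).add
      ((hN.div_const _).stronglyMeasurable)
  · intro s t hst
    have hm : pp.filtration s ≤ ‹MeasurableSpace Ω› := pp.filtration.le s
    -- key functions
    set Ns : Ω → ℝ := fun ω => (pp.N s ω : ℝ) with hNsdef
    set Dr : Ω → ℝ := fun ω => ((pp.N t ω - pp.N s ω : ℕ) : ℝ) with hDrdef
    set G : Ω → ℝ := fun ω =>
      (pp.W t ω - pp.W s ω - Ns ω * ((t : ℝ) - s))
        - Dr ω ^ 2 / (2 * (lam : ℝ)) + Dr ω / (2 * (lam : ℝ)) with hGdef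
    set f1 : Ω → ℝ := fun ω =>
      pp.W s ω - (pp.N s ω : ℝ) ^ 2 / (2 * (lam : ℝ))
        + (pp.N s ω : ℝ) / (2 * (lam : ℝ)) with hf1def
    -- integrability
    have hNs_int : Integrable Ns P := pp.integrable_N s
    have hDr_int : Integrable Dr P := pp.integrable_D s t hst
    have hDrsq_int : Integrable (fun ω => Dr ω ^ 2) P := pp.integrable_D_sq s t hst
    have hYs_int : Integrable (fun ω => pp.W t ω - pp.W s ω - Ns ω * ((t : ℝ) - s)) P :=
      ((pp.integrable_W t).sub (pp.integrable_W s)).sub (hNs_int.mul_const _)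
    have hG_int : Integrable G P :=
      (hYs_int.sub (hDrsq_int.div_const _)).add (hDr_int.div_const _)
    have hf1_int : Integrable f1 P :=
      ((pp.integrable_W s).sub ((pp.integrable_N_sq s).div_const _)).add
        ((pp.integrable_N s).div_const _)
    have hf2_int : Integrable ((((t : ℝ) - s) • Ns)) P := hNs_int.smul _
    have hNsDr_int : Integrable (Ns * Dr) P :=
      (pp.indepFun_Ns_D hst).integrable_mul hNs_int hDr_int
    have hf4_int : Integrable ((-(lam : ℝ)⁻¹) • (Ns * Dr)) P := hNsDr_int.smul _
    -- strong measurability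
    have hNs_sm : StronglyMeasurable[pp.filtration s] Ns :=
      (pp.measurable_N_filt (le_refl s)).stronglyMeasurable
    have hf1_sm : StronglyMeasurable[pp.filtration s] f1 := by
      have hN := pp.measurable_N_filt (le_refl s)
      exact ((pp.sm_W_filt s).sub
          (((hN.pow_const 2).div_const _).stronglyMeasurable)).add
        ((hN.div_const _).stronglyMeasurable)
    have hDr_smF : Measurable[pp.future s] Dr := pp.measurable_D_future hst
    have hG_smF : StronglyMeasurable[pp.future s] G :=
      ((pp.sm_Ys_future hst).sub
        (((hDr_smF.pow_const 2).div_const _).stronglyMeasurable)).add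
      ((hDr_smF.div_const _).stronglyMeasurable)
    have hindep : Indep (pp.future s) (pp.filtration s) P :=
      (pp.indep_filtration_future s).symm
    -- decomposition
    have hdecomp : (fun ω => pp.W t ω - (pp.N t ω : ℝ) ^ 2 / (2 * (lam : ℝ))
          + (pp.N t ω : ℝ) / (2 * (lam : ℝ)))
        = f1 + ((((t : ℝ) - s) • Ns)) + G + ((-(lam : ℝ)⁻¹) • (Ns * Dr)) := by
      funext ω
      simp only [Pi.add_apply, Pi.smul_apply, Pi.mul_apply, smul_eq_mul, hGdef, hf1def]
      have hD : Dr ω = (pp.N t ω : ℝ) - Ns ω := pp.cast_sub s t hst ω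
      rw [hD]
      field_simp
      ring
    -- conditional expectations
    have e_add1 : P[f1 + (((t : ℝ) - s) • Ns) + G + ((-(lam : ℝ)⁻¹) • (Ns * Dr))
          | pp.filtration s]
        =ᵐ[P] P[f1 + (((t : ℝ) - s) • Ns) + G | pp.filtration s]
          + P[(-(lam : ℝ)⁻¹) • (Ns * Dr) | pp.filtration s] :=
      condExp_add ((hf1_int.add hf2_int).add hG_int) hf4_int _
    have e_add2 : P[f1 + (((t : ℝ) - s) • Ns) + G | pp.filtration s]
        =ᵐ[P] P[f1 + (((t : ℝ) - s) • Ns) | pp.filtration s] + P[G | pp.filtration s] :=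
      condExp_add (hf1_int.add hf2_int) hG_int _
    have e_add3 : P[f1 + (((t : ℝ) - s) • Ns) | pp.filtration s]
        =ᵐ[P] P[f1 | pp.filtration s] + P[(((t : ℝ) - s) • Ns) | pp.filtration s] :=
      condExp_add hf1_int hf2_int _
    have e_f1 : P[f1 | pp.filtration s] = f1 :=
      condExp_of_stronglyMeasurable hm hf1_sm hf1_int
    have e_f2 : P[(((t : ℝ) - s) • Ns) | pp.filtration s] = (((t : ℝ) - s) • Ns) :=
      condExp_of_stronglyMeasurable hm (hNs_sm.const_smul _) hf2_int
    have hGint_val : ∫ ω, G ω ∂P = 0 := by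
      have hint1 : Integrable (fun ω => pp.W t ω - pp.W s ω - Ns ω * ((t : ℝ) - s)
          - Dr ω ^ 2 / (2 * (lam : ℝ))) P := hYs_int.sub (hDrsq_int.div_const _)
      have h1 : ∫ ω, G ω ∂P
          = (∫ ω, (pp.W t ω - pp.W s ω - Ns ω * ((t : ℝ) - s)
              - Dr ω ^ 2 / (2 * (lam : ℝ))) ∂P)
            + ∫ ω, Dr ω / (2 * (lam : ℝ)) ∂P :=
        integral_add hint1 (hDr_int.div_const _)
      have h2 : ∫ ω, (pp.W t ω - pp.W s ω - Ns ω * ((t : ℝ) - s)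
            - Dr ω ^ 2 / (2 * (lam : ℝ))) ∂P
          = (∫ ω, (pp.W t ω - pp.W s ω - Ns ω * ((t : ℝ) - s)) ∂P)
            - ∫ ω, Dr ω ^ 2 / (2 * (lam : ℝ)) ∂P :=
        integral_sub hYs_int (hDrsq_int.div_const _)
      have hv1 : ∫ ω, (pp.W t ω - pp.W s ω - Ns ω * ((t : ℝ) - s)) ∂P
          = (lam : ℝ) * ((t : ℝ) - s) ^ 2 / 2 := pp.integral_Ys hst
      have hv2 : ∫ ω, Dr ω ^ 2 / (2 * (lam : ℝ)) ∂P
          = (∫ ω, Dr ω ^ 2 ∂P) / (2 * (lam : ℝ)) := integral_div _ _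
      have hv3 : ∫ ω, Dr ω / (2 * (lam : ℝ)) ∂P
          = (∫ ω, Dr ω ∂P) / (2 * (lam : ℝ)) := integral_div _ _
      have hv4 : ∫ ω, Dr ω ^ 2 ∂P
          = ((lam : ℝ) * ((t : ℝ) - s)) ^ 2 + (lam : ℝ) * ((t : ℝ) - s) :=
        pp.integral_D_sq s t hst
      have hv5 : ∫ ω, Dr ω ∂P = (lam : ℝ) * ((t : ℝ) - s) := pp.integral_D s t hst
      rw [h1, h2, hv1, hv2, hv3, hv4, hv5]
      field_simp
      ring
    have e_G : P[G | pp.filtration s] =ᵐ[P] fun _ => (0 : ℝ) := by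
      have h := condExp_indep_eq (pp.future_le s) hm hG_smF hindep
      have heq : (fun _ : Ω => ∫ x, G x ∂P) = fun _ : Ω => (0 : ℝ) :=
        funext fun _ => hGint_val
      rwa [heq] at h
    have e_Dr : P[Dr | pp.filtration s] =ᵐ[P] fun _ => (lam : ℝ) * ((t : ℝ) - s) := by
      have h := condExp_indep_eq (pp.future_le s) hm hDr_smF.stronglyMeasurable hindep
      have heq : (fun _ : Ω => ∫ x, Dr x ∂P)
          = fun _ : Ω => (lam : ℝ) * ((t : ℝ) - s) :=
        funext fun _ => pp.integral_D s t hst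
      rwa [heq] at h
    have e4a := condExp_smul (μ := P) (m := pp.filtration s) (-(lam : ℝ)⁻¹) (Ns * Dr)
    have e4b : P[Ns * Dr | pp.filtration s] =ᵐ[P] Ns * P[Dr | pp.filtration s] :=
      condExp_mul_of_stronglyMeasurable_left hNs_sm hNsDr_int hDr_int
    have e_4 : P[(-(lam : ℝ)⁻¹) • (Ns * Dr) | pp.filtration s]
        =ᵐ[P] fun ω => -(lam : ℝ)⁻¹ * (Ns ω * ((lam : ℝ) * ((t : ℝ) - s))) := by
      filter_upwards [e4a, e4b, e_Dr] with ω ha hb hc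
      rw [ha, Pi.smul_apply, hb, Pi.mul_apply, hc, smul_eq_mul]
    -- combine
    have hfinal : P[(fun ω => pp.W t ω - (pp.N t ω : ℝ) ^ 2 / (2 * (lam : ℝ))
          + (pp.N t ω : ℝ) / (2 * (lam : ℝ))) | pp.filtration s] =ᵐ[P] f1 := by
      rw [hdecomp]
      filter_upwards [e_add1, e_add2, e_add3, e_G, e_4] with ω h1 h2 h3 h4 h5
      rw [h1, Pi.add_apply, h2, Pi.add_apply, h3, Pi.add_apply, e_f1, e_f2, h4, h5]
      simp only [Pi.smul_apply, smul_eq_mul]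
      field_simp
      ring
    exact hfinal
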